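/- The set N of all types is finite; that is, the set of all tuples [m_1, ..., m_r] (of any length r ≥ 3) with 2 ≤ m_1 ≤ ... ≤ m_r, Θ(T) > 0, α(T) := 4/Θ(T) a positive integer, and m_i dividing α(T) for all i, is a finite set. -/

import Mathlib

/-- For a tuple `T = [m₁, ..., m_r]`, `Θ(T) := -2 + ∑ᵢ (1 - 1/mᵢ)` as a rational number. -/
def Theta (T : List ℕ) : ℚ :=
  -2 + (T.map (fun m => 1 - (1 : ℚ) / m)).sum

/-- `T` is a type: `T = [m₁, ..., m_r]` with `r ≥ 3`, `2 ≤ m₁ ≤ ... ≤ m_r`, `Θ(T) > 0`,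
`α(T) = 4/Θ(T)` a positive integer, and `mᵢ ∣ α(T)` for all `i`. -/
def IsType (T : List ℕ) : Prop :=
  3 ≤ T.length ∧ T.Pairwise (· ≤ ·) ∧ (∀ m ∈ T, 2 ≤ m) ∧ 0 < Theta T ∧
    ∃ a : ℕ, 0 < a ∧ (a : ℚ) * Theta T = 4 ∧ ∀ m ∈ T, m ∣ a

lemma theta_nil : Theta [] = -2 := by unfold Theta; simp

lemma theta_cons (m : ℕ) (t : List ℕ) : Theta (m :: t) = (1 - 1/(m:ℚ)) + Theta t := by
  unfold Theta; simp; ring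

lemma inv_anti {m k : ℕ} (hm : 0 < m) (h : m ≤ k) : (1:ℚ)/k ≤ 1/m := by
  have h1 : (0:ℚ) < m := by exact_mod_cast hm
  have h2 : (m:ℚ) ≤ k := by exact_mod_cast h
  exact one_div_le_one_div_of_le h1 h2

lemma inv_pos' {m : ℕ} (hm : 0 < m) : (0:ℚ) < 1/m := by
  have h1 : (0:ℚ) < m := by exact_mod_cast hm
  positivity

lemma term_ge {m : ℕ} (h : 2 ≤ m) : (1:ℚ)/2 ≤ 1 - 1/m := by
  have := inv_anti (by norm_num : 0 < 2) h
  linarith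

lemma term_ge3 {m : ℕ} (h : 3 ≤ m) : (2:ℚ)/3 ≤ 1 - 1/m := by
  have := inv_anti (by norm_num : 0 < 3) h
  linarith

lemma theta_ge (T : List ℕ) (h2 : ∀ m ∈ T, 2 ≤ m) :
    -2 + (T.length : ℚ)/2 ≤ Theta T := by
  induction T with
  | nil => simp [theta_nil]
  | cons m t ih =>
    have hm := term_ge (h2 m (by simp))
    have ht := ih (fun x hx => h2 x (List.mem_cons_of_mem _ hx))
    rw [theta_cons]
    simp only [List.length_cons]
    push_cast
    linarith

/-- The gap lemma: a positive `Θ` is at least `1/42`. -/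
lemma theta_gap (T : List ℕ) (h3 : 3 ≤ T.length) (hs : T.Pairwise (· ≤ ·))
    (h2 : ∀ m ∈ T, 2 ≤ m) (hpos : 0 < Theta T) : 1/42 ≤ Theta T := by
  match T with
  | [p, q, s] =>
    have hp : 2 ≤ p := h2 p (by simp)
    have hq : 2 ≤ q := h2 q (by simp)
    have hsn : 2 ≤ s := h2 s (by simp)
    have hpq : p ≤ q := by
      simp only [List.pairwise_cons] at hs
      exact hs.1 q (by simp)
    have hqs : q ≤ s := by
      simp only [List.pairwise_cons] at hs
      exact hs.2.1 s (by simp)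
    have hΘ : Theta [p, q, s] = 1 - 1/(p:ℚ) - 1/q - 1/s := by
      rw [theta_cons, theta_cons, theta_cons, theta_nil]; ring
    rw [hΘ] at hpos ⊢
    by_cases h4 : 4 ≤ p
    · have i1 := inv_anti (by norm_num : 0 < 4) h4
      have i2 := inv_anti (by norm_num : 0 < 4) (le_trans h4 hpq)
      have i3 := inv_anti (by norm_num : 0 < 4) (le_trans (le_trans h4 hpq) hqs)
      linarith
    · push_neg at h4
      interval_cases p
      · -- p = 2
        by_cases hq5 : 5 ≤ q
        · have i2 := inv_anti (by norm_num : 0 < 5) hq5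
          have i3 := inv_anti (by norm_num : 0 < 5) (le_trans hq5 hqs)
          norm_num at hpos i2 i3 ⊢
          linarith
        · push_neg at hq5
          interval_cases q
          · -- q = 2 : contradiction
            exfalso
            have := inv_pos' (show 0 < s by omega)
            norm_num at hpos
            linarith
          · -- q = 3 : need s ≥ 7
            have h7 : 7 ≤ s := by
              by_contra h
              push_neg at h
              have := inv_anti (show 0 < s by omega) (show s ≤ 6 by omega)
              norm_num at hpos this
              linarith
            have := inv_anti (by norm_num : 0 < 7) h7
            norm_num at hpos this ⊢
            linarith
          · -- q = 4 : need s ≥ 5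
            have h5 : 5 ≤ s := by
              by_contra h
              push_neg at h
              have := inv_anti (show 0 < s by omega) (show s ≤ 4 by omega)
              norm_num at hpos this
              linarith
            have := inv_anti (by norm_num : 0 < 5) h5
            norm_num at hpos this ⊢
            linarith
      · -- p = 3
        by_cases hq4 : 4 ≤ q
        · have i2 := inv_anti (by norm_num : 0 < 4) hq4
          have i3 := inv_anti (by norm_num : 0 < 4) (le_trans hq4 hqs)
          norm_num at hpos i2 i3 ⊢
          linarith
        · push_neg at hq4
          have hq3 : q = 3 := by omega
          subst hq3
          -- need s ≥ 4
          have h4s : 4 ≤ s := by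
            by_contra h
            push_neg at h
            have := inv_anti (show 0 < s by omega) (show s ≤ 3 by omega)
            norm_num at hpos this
            linarith
          have := inv_anti (by norm_num : 0 < 4) h4s
          norm_num at hpos this ⊢
          linarith
  | [p, q, s, w] =>
    have hp := term_ge (h2 p (by simp))
    have hq := term_ge (h2 q (by simp))
    have hss := term_ge (h2 s (by simp))
    have hΘ : Theta [p, q, s, w] =
        (1 - 1/(p:ℚ)) + (1 - 1/q) + (1 - 1/s) + (1 - 1/w) - 2 := by
      rw [theta_cons, theta_cons, theta_cons, theta_cons, theta_nil]; ring
    by_cases hw3 : 3 ≤ w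
    · have hw := term_ge3 hw3
      rw [hΘ]
      linarith
    · -- all equal 2, Theta = 0, contradiction
      exfalso
      have hw2 : w = 2 := by have := h2 w (by simp); omega
      simp only [List.pairwise_cons] at hs
      have hp2 : p = 2 := by
        have h1 := hs.1 w (by simp)
        have := h2 p (by simp); omega
      have hq2 : q = 2 := by
        have h1 := hs.2.1 w (by simp)
        have := h2 q (by simp); omega
      have hs2 : s = 2 := by
        have h1 := hs.2.2.1 w (by simp)
        have := h2 s (by simp); omega
      rw [hΘ, hp2, hq2, hs2, hw2] at hpos
      norm_num at hpos
  | p :: q :: s :: w :: x :: t =>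
    have := theta_ge (p :: q :: s :: w :: x :: t) h2
    have hl : (5:ℚ) ≤ ((p :: q :: s :: w :: x :: t).length : ℚ) := by
      simp only [List.length_cons]
      push_cast
      have : (0:ℚ) ≤ t.length := by positivity
      linarith
    linarith

/-- The set `𝒩` of all types is finite. -/
theorem setOf_isType_finite : {T : List ℕ | IsType T}.Finite := by
  have key : {T : List ℕ | IsType T} ⊆
      (fun l : List (Fin 169) => l.map Fin.val) '' {l : List (Fin 169) | l.length ≤ 12} := by
    rintro T ⟨h3, hs, h2, hpos, a, ha, ha4, hdvd⟩
    have hgap := theta_gap T h3 hs h2 hpos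
    have haQ : (0:ℚ) < a := by exact_mod_cast ha
    have hab : (a : ℚ) ≤ 168 := by nlinarith
    have hth : Theta T ≤ 4 := by
      have h1 : (1:ℚ) ≤ a := by exact_mod_cast ha
      nlinarith
    have hlen : T.length ≤ 12 := by
      have h1 := theta_ge T h2
      have h2' : (T.length : ℚ) ≤ 12 := by linarith
      exact_mod_cast h2'
    have hmem : ∀ m ∈ T, m < 169 := by
      intro m hm
      have h1 := Nat.le_of_dvd ha (hdvd m hm)
      have haN : a ≤ 168 := by exact_mod_cast hab
      omega
    refine ⟨T.map (fun m => (⟨m % 169, Nat.mod_lt m (by norm_num)⟩ : Fin 169)), by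
      simpa using hlen, ?_⟩
    simp only [List.map_map]
    have : T.map (Fin.val ∘ fun m => (⟨m % 169, Nat.mod_lt m (by norm_num)⟩ : Fin 169)) =
        T.map id := by
      apply List.map_congr_left
      intro m hm
      simp [Nat.mod_eq_of_lt (hmem m hm)]
    rw [this, List.map_id]
  exact Set.Finite.subset (Set.Finite.image _ (List.finite_length_le _ 12)) key
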